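/- Let K, F be bounded operators on a Hilbert space H, α > 0, ρ > 0, and r ∈ H with ‖K* r‖ ≤ M. Let φ_α = (α Id + K*K)⁻¹ K* r and φ_{α,ρ} = (α Id + ρ F*F + K*K)⁻¹ K* r. Then ‖φ_α - φ_{α,ρ}‖ ≤ (ρ/α²)·‖F*F‖·M. -/

import Mathlib

open RealInnerProductSpace

lemma aux_coercive_inverse
    {H : Type*} [NormedAddCommGroup H] [InnerProductSpace ℝ H] [CompleteSpace H]
    (A : H →L[ℝ] H) (α : ℝ) (hα : 0 < α)
    (hc : ∀ x, α * ‖x‖ * ‖x‖ ≤ ⟪A x, x⟫) :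
    IsUnit A ∧ ∀ y, ‖Ring.inverse A y‖ ≤ ‖y‖ / α := by
  set B : H →L[ℝ] H →L[ℝ] ℝ := (innerSL ℝ).comp A with hB
  have coercive : IsCoercive B := ⟨α, hα, fun u => hc u⟩
  set E := coercive.continuousLinearEquivOfBilin with hEdef
  have hE : ∀ v, E v = A v := by
    intro v
    apply ext_inner_right ℝ
    intro w
    rw [coercive.continuousLinearEquivOfBilin_apply]
    rfl
  have h1 : A * (E.symm : H →L[ℝ] H) = 1 := by
    ext x
    have := hE (E.symm x)
    simp only [ContinuousLinearMap.mul_apply, ContinuousLinearMap.one_apply,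
      ContinuousLinearMap.coe_coe, ContinuousLinearEquiv.coe_coe]
    rw [← this, E.apply_symm_apply]
  have h2 : (E.symm : H →L[ℝ] H) * A = 1 := by
    ext x
    simp only [ContinuousLinearMap.mul_apply, ContinuousLinearMap.one_apply,
      ContinuousLinearMap.coe_coe, ContinuousLinearEquiv.coe_coe]
    rw [← hE x, E.symm_apply_apply]
  have hU : IsUnit A := ⟨⟨A, (E.symm : H →L[ℝ] H), h1, h2⟩, rfl⟩
  refine ⟨hU, fun y => ?_⟩
  set x := Ring.inverse A y with hx
  have hAx : A x = y := by
    have := congrArg (fun T : H →L[ℝ] H => T y) (Ring.mul_inverse_cancel A hU)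
    simpa using this
  have hkey : α * ‖x‖ * ‖x‖ ≤ ‖y‖ * ‖x‖ := by
    calc α * ‖x‖ * ‖x‖ ≤ ⟪A x, x⟫ := hc x
    _ = ⟪y, x⟫ := by rw [hAx]
    _ ≤ ‖y‖ * ‖x‖ := real_inner_le_norm y x
  rcases eq_or_ne x 0 with h0 | h0
  · rw [h0]; simp; positivity
  · have hxpos : 0 < ‖x‖ := norm_pos_iff.mpr h0
    have : α * ‖x‖ ≤ ‖y‖ := by
      have := mul_le_mul_iff_left₀ hxpos |>.mp hkey
      linarith
    rw [le_div_iff₀ hα]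
    linarith

set_option maxHeartbeats 1000000 in
/-- Price for fairness. With `φ_α = (α Id + K*K)⁻¹ K* r` and
`φ_{α,ρ} = (α Id + ρ F*F + K*K)⁻¹ K* r`, and `‖K* r‖ ≤ M`, we have
`‖φ_α - φ_{α,ρ}‖ ≤ (ρ/α²)·‖F*F‖·M`. -/
theorem price_for_fairness
    {H : Type*} [NormedAddCommGroup H] [InnerProductSpace ℝ H] [CompleteSpace H]
    (K F : H →L[ℝ] H) (α ρ M : ℝ) (hα : 0 < α) (hρ : 0 < ρ)
    (r : H) (hM : ‖K.adjoint r‖ ≤ M) :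
    ‖Ring.inverse (α • (1 : H →L[ℝ] H) + K.adjoint ∘L K) (K.adjoint r)
        - Ring.inverse (α • (1 : H →L[ℝ] H) + ρ • (F.adjoint ∘L F) + K.adjoint ∘L K)
            (K.adjoint r)‖
      ≤ ρ / α ^ 2 * ‖F.adjoint ∘L F‖ * M := by
  set A : H →L[ℝ] H := α • (1 : H →L[ℝ] H) + K.adjoint ∘L K with hAdef
  set Bop : H →L[ℝ] H := α • (1 : H →L[ℝ] H) + ρ • (F.adjoint ∘L F) + K.adjoint ∘L K with hBdef
  have hKx : ∀ x : H, ⟪K.adjoint (K x), x⟫ = ⟪K x, K x⟫ := fun x =>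
    ContinuousLinearMap.adjoint_inner_left K x (K x)
  have hFx : ∀ x : H, ⟪F.adjoint (F x), x⟫ = ⟪F x, F x⟫ := fun x =>
    ContinuousLinearMap.adjoint_inner_left F x (F x)
  have hcA : ∀ x, α * ‖x‖ * ‖x‖ ≤ ⟪A x, x⟫ := by
    intro x
    have : ⟪A x, x⟫ = α * ⟪x, x⟫ + ⟪K x, K x⟫ := by
      simp [hAdef, inner_add_left, real_inner_smul_left, hKx x]
    rw [this, real_inner_self_eq_norm_mul_norm]
    have := real_inner_self_nonneg (x := K x)
    nlinarith
  have hcB : ∀ x, α * ‖x‖ * ‖x‖ ≤ ⟪Bop x, x⟫ := by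
    intro x
    have : ⟪Bop x, x⟫ = α * ⟪x, x⟫ + ρ * ⟪F x, F x⟫ + ⟪K x, K x⟫ := by
      simp [hBdef, inner_add_left, real_inner_smul_left, hKx x, hFx x]
    rw [this, real_inner_self_eq_norm_mul_norm]
    have h1 := real_inner_self_nonneg (x := K x)
    have h2 := real_inner_self_nonneg (x := F x)
    nlinarith
  obtain ⟨hUA, hbA⟩ := aux_coercive_inverse A α hα hcA
  obtain ⟨hUB, hbB⟩ := aux_coercive_inverse Bop α hα hcB
  set u := Ring.inverse A (K.adjoint r) with hu
  set v := Ring.inverse Bop (K.adjoint r) with hv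
  have hAu : A u = K.adjoint r := by
    have := congrArg (fun T : H →L[ℝ] H => T (K.adjoint r)) (Ring.mul_inverse_cancel A hUA)
    simpa using this
  have hBv : Bop v = K.adjoint r := by
    have := congrArg (fun T : H →L[ℝ] H => T (K.adjoint r)) (Ring.mul_inverse_cancel Bop hUB)
    simpa using this
  have hdiff : u - v = Ring.inverse A ((ρ • (F.adjoint ∘L F)) v) := by
    have hinv : ∀ z : H, Ring.inverse A (A z) = z := by
      intro z
      have := congrArg (fun T : H →L[ℝ] H => T z) (Ring.inverse_mul_cancel A hUA)
      simpa using this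
    have hAv : A v + (ρ • (F.adjoint ∘L F)) v = K.adjoint r := by
      rw [← hBv, hAdef, hBdef]
      simp only [ContinuousLinearMap.add_apply]
      abel
    have : A (u - v) = (ρ • (F.adjoint ∘L F)) v := by
      rw [map_sub, hAu]
      rw [← hAv]
      abel
    rw [← this, hinv]
  rw [hdiff]
  have hM0 : 0 ≤ M := le_trans (norm_nonneg _) hM
  have hFF : (0 : ℝ) ≤ ‖F.adjoint ∘L F‖ := norm_nonneg _
  have hv_bound : ‖v‖ ≤ M / α := le_trans (hbB _) (div_le_div_of_nonneg_right hM hα.le)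
  have hsm : ‖(ρ • (F.adjoint ∘L F)) v‖ ≤ ρ * ‖F.adjoint ∘L F‖ * ‖v‖ := by
    rw [ContinuousLinearMap.smul_apply, norm_smul, Real.norm_eq_abs, abs_of_pos hρ, mul_assoc]
    exact mul_le_mul_of_nonneg_left (ContinuousLinearMap.le_opNorm _ _) hρ.le
  calc ‖Ring.inverse A ((ρ • (F.adjoint ∘L F)) v)‖
      ≤ ‖(ρ • (F.adjoint ∘L F)) v‖ / α := hbA _
    _ ≤ ρ * ‖F.adjoint ∘L F‖ * ‖v‖ / α := div_le_div_of_nonneg_right hsm hα.le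
    _ ≤ ρ * ‖F.adjoint ∘L F‖ * (M / α) / α := by
        refine div_le_div_of_nonneg_right ?_ hα.le
        exact mul_le_mul_of_nonneg_left hv_bound (by positivity)
    _ = ρ / α ^ 2 * ‖F.adjoint ∘L F‖ * M := by
        field_simp [sq]
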